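/- For all positive integers n and d with n dividing d, one has (∑_{b ∣ n} b·μ(d/b)) · φ(d/n) = μ(d/n) · φ(d), where μ is the Möbius function and φ is Euler's totient function. Equivalently, ∑_{b ∣ n} b·μ(d/b) = μ(d/n) · φ(d)/φ(d/n). -/
import Mathlib
open Finset ArithmeticFunction

lemma totient_eq_sum_moebius (n : ℕ) (hn : 0 < n) :
    (Nat.totient n : ℤ) = ∑ c ∈ n.divisors, ((n / c : ℕ) : ℤ) * moebius c := by
  have h := (ArithmeticFunction.sum_eq_iff_sum_mul_moebius_eq (R := ℤ)
      (f := fun x => (Nat.totient x : ℤ)) (g := fun x => (x : ℤ))).mp ?_ n hn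
  · simp only [Int.cast_id] at h
    rw [← h, Nat.sum_divisorsAntidiagonal (f := fun x y => (moebius x : ℤ) * y)]
    exact Finset.sum_congr rfl fun x hx => mul_comm _ _
  · intro k hk
    exact_mod_cast congrArg (Nat.cast : ℕ → ℤ) (Nat.sum_totient k)

lemma key (m : ℕ) : ∀ n : ℕ, 0 < n →
    (∑ c ∈ n.divisors, ((n / c : ℕ) : ℤ) * moebius (m * c)) * (Nat.totient m : ℤ)
      = moebius m * (Nat.totient (n * m) : ℤ) := by
  induction m using Nat.strong_induction_on with
  | _ m IH =>
  intro n hn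
  rcases Nat.eq_zero_or_pos m with rfl | hm
  · simp
  by_cases hm1 : m = 1
  · subst hm1
    simp only [one_mul, mul_one, Nat.totient_one, Nat.cast_one, moebius_apply_one]
    exact (totient_eq_sum_moebius n hn).symm
  by_cases hsq : Squarefree m
  swap
  · rw [moebius_eq_zero_of_not_squarefree hsq]
    rw [Finset.sum_eq_zero, zero_mul, zero_mul]
    intro c hc
    rw [moebius_eq_zero_of_not_squarefree, mul_zero]
    exact fun h => hsq (h.squarefree_of_dvd (Dvd.intro c rfl))
  -- m squarefree, 2 ≤ m
  set p := m.minFac with hp_def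
  have hp : p.Prime := Nat.minFac_prime hm1
  set m' := m / p with hm'_def
  have hmm : m = p * m' := (Nat.mul_div_cancel' m.minFac_dvd).symm
  have hpm' : ¬ p ∣ m' := by
    intro h
    have : p * p ∣ m := by rw [hmm]; exact mul_dvd_mul_left p h
    exact hp.not_isUnit (hsq p this)
  have hm'pos : 0 < m' := by
    rcases Nat.eq_zero_or_pos m' with h | h
    · rw [h, mul_zero] at hmm; omega
    · exact h
  have hm'lt : m' < m := by
    have h2 := hp.two_le
    nlinarith [hmm]
  set a := n.factorization p with ha_def
  set n' := n / p ^ a with hn'_def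
  have hnn : n = p ^ a * n' := (Nat.ordProj_mul_ordCompl_eq_self n p).symm
  have hpn' : ¬ p ∣ n' := Nat.not_dvd_ordCompl hp hn.ne'
  have hn'pos : 0 < n' := Nat.ordCompl_pos p hn.ne'
  -- Step 1 : the sum S(n, m) = -(p^a) * S(n', m')
  have step1 : (∑ c ∈ n.divisors, ((n / c : ℕ) : ℤ) * moebius (m * c))
      = -(p ^ a : ℤ) * ∑ c ∈ n'.divisors, ((n' / c : ℕ) : ℤ) * moebius (m' * c) := by
    rw [← Finset.sum_filter_add_sum_filter_not n.divisors (fun c => p ∣ c)]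
    have h1 : ∑ c ∈ n.divisors.filter (fun c => p ∣ c),
        ((n / c : ℕ) : ℤ) * moebius (m * c) = 0 := by
      apply Finset.sum_eq_zero
      intro c hc
      rw [Finset.mem_filter] at hc
      rw [moebius_eq_zero_of_not_squarefree, mul_zero]
      intro hsqc
      have : p * p ∣ m * c := by
        rw [hmm, mul_assoc]
        exact mul_dvd_mul_left p (hc.2.mul_left m')
      exact hp.not_isUnit (hsqc p this)
    have h2 : n.divisors.filter (fun c => ¬ p ∣ c) = n'.divisors := by
      ext c
      simp only [Finset.mem_filter, Nat.mem_divisors]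
      constructor
      · rintro ⟨⟨hcd, -⟩, hpc⟩
        refine ⟨?_, hn'pos.ne'⟩
        have hco : Nat.Coprime c (p ^ a) :=
          Nat.Coprime.pow_right a ((hp.coprime_iff_not_dvd.mpr hpc).symm)
        exact hco.dvd_of_dvd_mul_left (hnn ▸ hcd)
      · rintro ⟨hcd, -⟩
        exact ⟨⟨hcd.trans ⟨p ^ a, by rw [hnn]; ring⟩, hn.ne'⟩,
          fun h => hpn' (h.trans hcd)⟩
    rw [h1, zero_add, h2, Finset.mul_sum]
    apply Finset.sum_congr rfl
    intro c hc
    rw [Nat.mem_divisors] at hc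
    have hpc : ¬ p ∣ c := fun h => hpn' (h.trans hc.1)
    have hdiv : n / c = p ^ a * (n' / c) := by
      rw [hnn, Nat.mul_div_assoc _ hc.1]
    have hmu : moebius (m * c) = - moebius (m' * c) := by
      have hcop : Nat.Coprime p (m' * c) :=
        Nat.Coprime.mul_right (hp.coprime_iff_not_dvd.mpr hpm')
          (hp.coprime_iff_not_dvd.mpr hpc)
      rw [hmm, mul_assoc, isMultiplicative_moebius.map_mul_of_coprime hcop,
        moebius_apply_prime hp]
      ring
    rw [hdiv, hmu]
    push_cast
    ring
  -- Step 2-4 : totient and moebius factorizations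
  have hcop_pm' : Nat.Coprime p m' := hp.coprime_iff_not_dvd.mpr hpm'
  have e2 : (Nat.totient m : ℤ) = (Nat.totient p : ℤ) * (Nat.totient m' : ℤ) := by
    rw [hmm, Nat.totient_mul hcop_pm']
    push_cast; ring
  have e3 : moebius m = - moebius m' := by
    rw [hmm, isMultiplicative_moebius.map_mul_of_coprime hcop_pm',
      moebius_apply_prime hp]
    ring
  have e4 : (Nat.totient (n * m) : ℤ)
      = (p : ℤ) ^ a * (Nat.totient p : ℤ) * (Nat.totient (n' * m') : ℤ) := by
    have hnm : n * m = p ^ (a + 1) * (n' * m') := by rw [hmm, hnn]; ring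
    have hcop2 : Nat.Coprime (p ^ (a + 1)) (n' * m') :=
      Nat.Coprime.pow_left _ (Nat.Coprime.mul_right
        (hp.coprime_iff_not_dvd.mpr hpn') hcop_pm')
    rw [hnm, Nat.totient_mul hcop2, Nat.totient_prime_pow hp (Nat.succ_pos a),
      Nat.totient_prime hp]
    push_cast [Nat.succ_sub_one, le_of_lt hp.one_lt]
    ring
  rw [step1, e2, e3, e4]
  have IH' := IH m' hm'lt n' hn'pos
  linear_combination (-(p : ℤ) ^ a * (Nat.totient p : ℤ)) * IH'

/-- For positive integers `n ∣ d`: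
`(∑_{b ∣ n} b·μ(d/b)) · φ(d/n) = μ(d/n) · φ(d)`. -/
theorem sum_mul_moebius_eq (n d : ℕ) (hn : 0 < n) (hd : 0 < d) (hnd : n ∣ d) :
    (∑ b ∈ n.divisors, (b : ℤ) * ArithmeticFunction.moebius (d / b)) *
        (Nat.totient (d / n) : ℤ)
      = ArithmeticFunction.moebius (d / n) * (Nat.totient d : ℤ) := by
  set m := d / n with hm_def
  have hdm : d = n * m := (Nat.mul_div_cancel' hnd).symm
  have hsum : (∑ b ∈ n.divisors, (b : ℤ) * moebius (d / b))
      = ∑ c ∈ n.divisors, ((n / c : ℕ) : ℤ) * moebius (m * c) := by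
    rw [← Nat.sum_div_divisors n (fun b => (b : ℤ) * moebius (d / b))]
    apply Finset.sum_congr rfl
    intro c hc
    rw [Nat.mem_divisors] at hc
    have hcpos : 0 < c := Nat.pos_of_dvd_of_pos hc.1 hn
    have hncpos : 0 < n / c := Nat.div_pos (Nat.le_of_dvd hn hc.1) hcpos
    have hx : d = m * c * (n / c) := by
      conv_lhs => rw [hdm, ← Nat.div_mul_cancel hc.1]
      ring
    have : d / (n / c) = m * c := by rw [hx, Nat.mul_div_cancel _ hncpos]
    rw [this]
  rw [hsum, hdm]
  exact key m n hn
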